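/- Let F• : Y• → X• be a morphism of simplicial sets with X• 2-Segal. The following are equivalent: (1) for every n ≥ 1 and every 0 ≤ i < j ≤ n the outer square with corners Y_n, Y_{{0,...,i,j,...,n}}, X_{{i,...,j}}, X_{{i,j}} (where Y_n → Y_{{i,...,j}} → X_{{i,...,j}} is one composite and Y_{{0,...,i,j,...,n}} → Y_{{i,j}} → X_{{i,j}} the other) is a pullback of sets; (2) Y• is 2-Segal and for every n ≥ 1 the square Y_n → Y_{{0,n}}, Y_n → X_n, Y_{{0,n}} → X_{{0,n}}, X_n → X_{{0,n}} is a pullback of sets. -/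

import Mathlib

open CategoryTheory Simplicial SimplexCategory Opposite

namespace RelSegal

/-- The morphism `[m] ⟶ [n]` in the simplex category determined by a monotone `ℕ`-valued map. -/
def natHom (m n : ℕ) (f : ℕ → ℕ) (hf : Monotone f) (h : f m ≤ n) :
    (⦋m⦌ : SimplexCategory) ⟶ ⦋n⦌ :=
  SimplexCategory.mkHom
    { toFun := fun k => ⟨f k.1, by have := hf (Nat.lt_succ_iff.mp k.2); omega⟩
      monotone' := fun a b hab => by
        simp only [Fin.mk_le_mk]; exact hf hab }

/-- Restriction of simplices along a morphism of the simplex category. -/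
def rmap (X : SSet) {m n : ℕ} (φ : (⦋m⦌ : SimplexCategory) ⟶ ⦋n⦌) :
    X.obj (op ⦋n⦌) → X.obj (op ⦋m⦌) := X.map φ.op

/-- The inclusion of the vertex `i` of `[n]`. -/
def vert (n i : ℕ) (h : i ≤ n) : (⦋0⦌ : SimplexCategory) ⟶ ⦋n⦌ :=
  natHom 0 n (fun _ => i) monotone_const h

/-- The inclusion of the edge `{i,j}` of `[n]`. -/
def edge (n i j : ℕ) (hij : i ≤ j) (hj : j ≤ n) : (⦋1⦌ : SimplexCategory) ⟶ ⦋n⦌ :=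
  natHom 1 n (fun k => i + k * (j - i))
    (fun a b hab => by
      have := Nat.mul_le_mul_right (j - i) hab
      show i + a * (j - i) ≤ i + b * (j - i); omega)
    (by show i + 1 * (j - i) ≤ n; omega)

/-- The inclusion of the interval `{i, i+1, …, j}` of `[n]`. -/
def interval (n i j : ℕ) (hij : i ≤ j) (hj : j ≤ n) : (⦋j - i⦌ : SimplexCategory) ⟶ ⦋n⦌ :=
  natHom (j - i) n (fun k => i + k) (fun a b hab => by show i + a ≤ i + b; omega)
    (by show i + (j - i) ≤ n; omega)

/-- A commutative square of sets which is a pullback: the canonical map into the fibre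
product is a bijection. -/
def IsSetPullback {A B C D : Type*} (p : A → B) (q : A → C) (g : B → D) (h : C → D) : Prop :=
  (∀ a, g (p a) = h (q a)) ∧ ∀ b c, g b = h c → ∃! a, p a = b ∧ q a = c

/-- A simplicial set is `1`-Segal if for every `n ≥ 2` the Segal map
`X_n → X_1 ×_{X_0} ⋯ ×_{X_0} X_1` is a bijection (injectivity together with
surjectivity onto the compatible families). -/
def Is1Segal (X : SSet) : Prop :=
  ∀ n, 2 ≤ n →
    (∀ x y : X.obj (op ⦋n⦌),
      (∀ i (hi : i + 1 ≤ n),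
        rmap X (edge n i (i + 1) (by omega) hi) x = rmap X (edge n i (i + 1) (by omega) hi) y) →
      x = y) ∧
    (∀ f : ∀ i, i + 1 ≤ n → X.obj (op ⦋1⦌),
      (∀ i (h1 : i + 1 ≤ n) (h2 : (i + 1) + 1 ≤ n),
        rmap X (vert 1 1 le_rfl) (f i h1) = rmap X (vert 1 0 (by omega)) (f (i + 1) h2)) →
      ∃ x : X.obj (op ⦋n⦌), ∀ i (hi : i + 1 ≤ n),
        rmap X (edge n i (i + 1) (by omega) hi) x = f i hi)

/-- The inclusion of the subset `{0, …, i, j, …, n}` of `[n]`. -/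
def outer (n i j : ℕ) (hij : i < j) (hj : j ≤ n) :
    (⦋n - j + i + 1⦌ : SimplexCategory) ⟶ ⦋n⦌ :=
  natHom (n - j + i + 1) n (fun k => if k ≤ i then k else k + (j - i - 1))
    (fun a b hab => by dsimp only; split_ifs <;> omega)
    (by try dsimp only
        split_ifs <;> omega)

/-- A simplicial set is `2`-Segal if for every `n ≥ 3` and `0 ≤ i < j ≤ n` the map
`X_n → X_{{i,…,j}} ×_{X_{{i,j}}} X_{{0,…,i,j,…,n}}` is a bijection. -/
def Is2Segal (X : SSet) : Prop :=
  ∀ n i j (_ : 3 ≤ n) (hij : i < j) (hj : j ≤ n),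
    IsSetPullback
      (rmap X (interval n i j hij.le hj))
      (rmap X (outer n i j hij hj))
      (rmap X (edge (j - i) 0 (j - i) (Nat.zero_le _) le_rfl))
      (rmap X (edge (n - j + i + 1) i (i + 1) (by omega) (by omega)))

universe v w

section Aux

lemma hom_ext {m n : ℕ} (φ φ' : (⦋m⦌ : SimplexCategory) ⟶ ⦋n⦌)
    (h : ∀ k : Fin (m + 1), ((φ.toOrderHom k : Fin (n + 1)) : ℕ) = (φ'.toOrderHom k : ℕ)) :
    φ = φ' := by
  apply SimplexCategory.Hom.ext
  apply OrderHom.ext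
  funext k
  exact Fin.ext (h k)

lemma natHom_val (m n : ℕ) (f : ℕ → ℕ) (hf : Monotone f) (h : f m ≤ n) (k : Fin (m + 1)) :
    (((natHom m n f hf h).toOrderHom k : Fin (n + 1)) : ℕ) = f k.1 := rfl

lemma edge_val (n i j : ℕ) (hij : i ≤ j) (hj : j ≤ n) (k : Fin (1 + 1)) :
    (((edge n i j hij hj).toOrderHom k : Fin (n + 1)) : ℕ) = i + k.1 * (j - i) := rfl

lemma interval_val (n i j : ℕ) (hij : i ≤ j) (hj : j ≤ n) (k : Fin (j - i + 1)) :
    (((interval n i j hij hj).toOrderHom k : Fin (n + 1)) : ℕ) = i + k.1 := rfl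

lemma outer_val (n i j : ℕ) (hij : i < j) (hj : j ≤ n) (k : Fin (n - j + i + 1 + 1)) :
    (((outer n i j hij hj).toOrderHom k : Fin (n + 1)) : ℕ)
      = if k.1 ≤ i then k.1 else k.1 + (j - i - 1) := rfl

lemma comp_val {a b c : ℕ} (φ : (⦋a⦌ : SimplexCategory) ⟶ ⦋b⦌) (ψ : (⦋b⦌ : SimplexCategory) ⟶ ⦋c⦌)
    (k : Fin (a + 1)) :
    (((φ ≫ ψ).toOrderHom k : Fin (c + 1)) : ℕ) = (ψ.toOrderHom (φ.toOrderHom k) : ℕ) := rfl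

lemma rmap_comp (X : SSet) {a b c : ℕ} (φ : (⦋a⦌ : SimplexCategory) ⟶ ⦋b⦌)
    (ψ : (⦋b⦌ : SimplexCategory) ⟶ ⦋c⦌) (x : X.obj (op ⦋c⦌)) :
    rmap X (φ ≫ ψ) x = rmap X φ (rmap X ψ x) := by
  show X.map (φ ≫ ψ).op x = (X.map ψ.op ≫ X.map φ.op) x
  rw [← X.map_comp]
  rfl

lemma rmap_bij (X : SSet) {a b : ℕ} (hab : a = b) (φ : (⦋a⦌ : SimplexCategory) ⟶ ⦋b⦌)
    (hv : ∀ k : Fin (a + 1), ((φ.toOrderHom k : Fin (b + 1)) : ℕ) = k.1) :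
    Function.Bijective (rmap X φ) := by
  subst hab
  have hid : ∀ k : Fin (a + 1), ((SimplexCategory.Hom.toOrderHom (𝟙 (⦋a⦌:SimplexCategory)) k : Fin (a+1)) : ℕ) = k.1 := fun _ => rfl
  have hφ : φ = 𝟙 (⦋a⦌:SimplexCategory) := hom_ext _ _ (fun k => (hv k).trans (hid k).symm)
  rw [hφ]
  show Function.Bijective (X.map (𝟙 (⦋a⦌ : SimplexCategory)).op)
  rw [op_id, X.map_id]
  exact Function.bijective_id

lemma rmap_heq (X : SSet) {m m' n : ℕ} (hm : m = m') (φ : (⦋m⦌ : SimplexCategory) ⟶ ⦋n⦌)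
    (φ' : (⦋m'⦌ : SimplexCategory) ⟶ ⦋n⦌)
    (hv : ∀ k : Fin (m + 1),
      ((φ.toOrderHom k : Fin (n + 1)) : ℕ)
        = (φ'.toOrderHom ⟨k.1, by simp only [SimplexCategory.len_mk]; omega⟩ : ℕ)) :
    HEq (rmap X φ) (rmap X φ') := by
  subst hm
  rw [hom_ext φ φ' (fun k => hv k)]

lemma app_rmap_heq (X Y : SSet) (F : Y ⟶ X) {a b : ℕ} (hab : a = b)
    (φ : (⦋a⦌ : SimplexCategory) ⟶ ⦋b⦌)
    (hv : ∀ k : Fin (a + 1), ((φ.toOrderHom k : Fin (b + 1)) : ℕ) = k.1) :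
    HEq (fun y : Y.obj (op ⦋b⦌) => F.app (op ⦋a⦌) (rmap Y φ y)) (F.app (op ⦋a⦌) : Y.obj (op ⦋a⦌) → X.obj (op ⦋a⦌)) := by
  subst hab
  have hid : ∀ k : Fin (a + 1), ((SimplexCategory.Hom.toOrderHom (𝟙 (⦋a⦌:SimplexCategory)) k : Fin (a+1)) : ℕ) = k.1 := fun _ => rfl
  have hφ : φ = 𝟙 (⦋a⦌:SimplexCategory) := hom_ext _ _ (fun k => (hv k).trans (hid k).symm)
  apply heq_of_eq
  funext y
  show F.app (op ⦋a⦌) (Y.map φ.op y) = _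
  rw [hφ, op_id, Y.map_id]
  rfl

lemma IsSetPullback.swap {A B C D : Type*} {p : A → B} {q : A → C} {g : B → D} {h : C → D}
    (hpb : IsSetPullback p q g h) : IsSetPullback q p h g := by
  obtain ⟨comm, uniq⟩ := hpb
  refine ⟨fun a => (comm a).symm, fun c b e => ?_⟩
  obtain ⟨a, ⟨h1, h2⟩, hu⟩ := uniq b c e.symm
  exact ⟨a, ⟨h2, h1⟩, fun a' ⟨j1, j2⟩ => hu a' ⟨j2, j1⟩⟩

lemma IsSetPullback.of_bij {A B C D : Type*} {p : A → B} {q : A → C} {g : B → D} {h : C → D}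
    (comm : ∀ a, g (p a) = h (q a)) (hp : Function.Bijective p) (hh : Function.Injective h) :
    IsSetPullback p q g h := by
  refine ⟨comm, fun b c e => ?_⟩
  obtain ⟨a, ha⟩ := hp.2 b
  refine ⟨a, ⟨ha, hh ?_⟩, fun a' ⟨j1, j2⟩ => hp.1 (j1.trans ha.symm)⟩
  rw [← comm a, ha, e]

lemma IsSetPullback.paste {A B C D E G : Type*} {p : A → B} {q : A → C} {g : B → D} {h : C → D}
    {u : C → E} {v : D → G} {w : E → G} {q₂ : A → E} {g₂ : B → G}
    (hq₂ : ∀ a, q₂ a = u (q a)) (hg₂ : ∀ b, g₂ b = v (g b))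
    (top : IsSetPullback p q g h) (bot : IsSetPullback h u v w) :
    IsSetPullback p q₂ g₂ w := by
  obtain ⟨tc, tu⟩ := top
  obtain ⟨bc, bu⟩ := bot
  constructor
  · intro a
    rw [hg₂, hq₂, tc a, bc (q a)]
  · intro b e he
    rw [hg₂] at he
    obtain ⟨c, ⟨hc1, hc2⟩, hcu⟩ := bu (g b) e he
    obtain ⟨a, ⟨ha1, ha2⟩, hau⟩ := tu b c hc1.symm
    refine ⟨a, ⟨ha1, by rw [hq₂, ha2, hc2]⟩, fun a' ⟨j1, j2⟩ => ?_⟩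
    rw [hq₂] at j2
    have : q a' = c := hcu (q a') ⟨(tc a').symm.trans (congrArg g j1), j2⟩
    exact hau a' ⟨j1, this⟩

lemma IsSetPullback.left_cancel {A B C D E G : Type*} {p : A → B} {q : A → C} {g : B → D}
    {h : C → D} {u : C → E} {v : D → G} {w : E → G} {q₂ : A → E} {g₂ : B → G}
    (hq₂ : ∀ a, q₂ a = u (q a)) (hg₂ : ∀ b, g₂ b = v (g b))
    (comm : ∀ a, g (p a) = h (q a))
    (rect : IsSetPullback p q₂ g₂ w) (bot : IsSetPullback h u v w) :
    IsSetPullback p q g h := by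
  obtain ⟨rc, ru⟩ := rect
  obtain ⟨bc, bu⟩ := bot
  refine ⟨comm, fun b c e => ?_⟩
  have he : g₂ b = w (u c) := by rw [hg₂, e, bc]
  obtain ⟨a, ⟨ha1, ha2⟩, hau⟩ := ru b (u c) he
  rw [hq₂] at ha2
  have hqa : q a = c := by
    obtain ⟨c', ⟨_, _⟩, hcu⟩ := bu (g b) (u c) (by rw [e, bc c])
    have e1 : q a = c' := hcu (q a) ⟨(comm a).symm.trans (congrArg g ha1), ha2⟩
    have e2 : c = c' := hcu c ⟨e.symm, rfl⟩
    rw [e1, e2]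
  refine ⟨a, ⟨ha1, hqa⟩, fun a' ⟨j1, j2⟩ => hau a' ⟨j1, by rw [hq₂, j2]⟩⟩

lemma edge_comp_outer {n i j : ℕ} (hij : i < j) (hj : j ≤ n)
    (h1 : i ≤ i + 1) (h2 : i + 1 ≤ n - j + i + 1) :
    edge (n - j + i + 1) i (i + 1) h1 h2 ≫ outer n i j hij hj
      = edge n i j hij.le hj := by
  apply hom_ext
  intro k
  have hk := k.isLt
  rw [comp_val]
  simp only [edge_val, outer_val]
  have : k.1 = 0 ∨ k.1 = 1 := by omega
  rcases this with h | h <;> simp only [h] <;> split_ifs <;> omega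

lemma edge_comp_interval {n i j : ℕ} (hij : i < j) (hj : j ≤ n)
    (h1 : (0:ℕ) ≤ j - i) (h2 : j - i ≤ j - i) :
    edge (j - i) 0 (j - i) h1 h2 ≫ interval n i j hij.le hj
      = edge n i j hij.le hj := by
  apply hom_ext
  intro k
  have hk := k.isLt
  rw [comp_val]
  simp only [edge_val, interval_val]
  have : k.1 = 0 ∨ k.1 = 1 := by omega
  rcases this with h | h <;> rw [h] <;> omega

lemma comm_Y (Y : SSet) {n i j : ℕ} (hij : i < j) (hj : j ≤ n)
    (h1 : i ≤ i + 1) (h2 : i + 1 ≤ n - j + i + 1) (h3 : (0:ℕ) ≤ j - i) (h4 : j - i ≤ j - i)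
    (a : Y.obj (op ⦋n⦌)) :
    rmap Y (edge (n - j + i + 1) i (i + 1) h1 h2) (rmap Y (outer n i j hij hj) a)
      = rmap Y (edge (j - i) 0 (j - i) h3 h4) (rmap Y (interval n i j hij.le hj) a) := by
  rw [← rmap_comp, ← rmap_comp, edge_comp_outer hij hj, edge_comp_interval hij hj]

lemma IsSetPullback.cast {A D : Type*} {B B' : Type v} {C C' : Type w} (hB : B = B') (hC : C = C')
    {p : A → B} {p' : A → B'} {q : A → C} {q' : A → C'} {g : B → D} {g' : B' → D}
    {h : C → D} {h' : C' → D}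
    (hp : HEq p p') (hq : HEq q q') (hg : HEq g g') (hh : HEq h h')
    (hpb : IsSetPullback p q g h) : IsSetPullback p' q' g' h' := by
  subst hB hC
  rw [eq_of_heq hp, eq_of_heq hq, eq_of_heq hg, eq_of_heq hh] at hpb
  exact hpb

end Aux

/-- for a morphism `F : Y ⟶ X` of simplicial sets with `X` 2-Segal, the
relative 2-Segal squares (corners `Y_n`, `Y_{{0,…,i,j,…,n}}`, `X_{{i,…,j}}`, `X_{{i,j}}`)
are all pullbacks of sets iff `Y` is 2-Segal and all the squares
(`Y_n`, `Y_{{0,n}}`, `X_n`, `X_{{0,n}}`) are pullbacks of sets. -/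
theorem statement4 (X Y : SSet) (F : Y ⟶ X) (hX : Is2Segal X) :
    (∀ n i j (_ : 1 ≤ n) (hij : i < j) (hj : j ≤ n),
      IsSetPullback
        (rmap Y (outer n i j hij hj))
        (fun y => F.app (op ⦋j - i⦌) (rmap Y (interval n i j hij.le hj) y))
        (fun y => F.app (op ⦋1⦌)
          (rmap Y (edge (n - j + i + 1) i (i + 1) (by omega) (by omega)) y))
        (rmap X (edge (j - i) 0 (j - i) (Nat.zero_le _) le_rfl)))
    ↔ (Is2Segal Y ∧
        ∀ n (_ : 1 ≤ n),
          IsSetPullback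
            (rmap Y (edge n 0 n (Nat.zero_le _) le_rfl))
            (F.app (op ⦋n⦌))
            (F.app (op ⦋1⦌))
            (rmap X (edge n 0 n (Nat.zero_le _) le_rfl))) := by
  constructor
  · intro hL
    have conv : ∀ m, 1 ≤ m →
        IsSetPullback (rmap Y (edge m 0 m (Nat.zero_le _) le_rfl)) (F.app (op ⦋m⦌))
          (F.app (op ⦋1⦌)) (rmap X (edge m 0 m (Nat.zero_le _) le_rfl)) := by
      intro m hm
      have h := hL m 0 m hm (by omega) le_rfl
      refine IsSetPullback.cast ?_ rfl ?_ ?_ ?_ ?_ h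
      · have e : m - m + 0 + 1 = 1 := by omega
        rw [e]
      · refine rmap_heq Y (by omega) _ _ ?_
        intro k
        have hk := k.isLt
        simp only [outer_val, edge_val]
        have : k.1 = 0 ∨ k.1 = 1 := by omega
        rcases this with h' | h' <;> rw [h'] <;> split_ifs <;> omega
      · exact app_rmap_heq X Y F (by omega) _
          (by intro k; simp only [interval_val]; omega)
      · exact app_rmap_heq X Y F (by omega) _
          (by intro k; simp only [edge_val]; omega)
      · exact HEq.rfl
    refine ⟨?_, conv⟩
    intro n i j h3 hij hj
    have rect := hL n i j (by omega) hij hj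
    have bot := conv (j - i) (by omega)
    exact (IsSetPullback.left_cancel
      (p := rmap Y (outer n i j hij hj))
      (q := rmap Y (interval n i j hij.le hj))
      (g := rmap Y (edge (n - j + i + 1) i (i + 1) (by omega) (by omega)))
      (h := rmap Y (edge (j - i) 0 (j - i) (Nat.zero_le _) le_rfl))
      (u := F.app (op ⦋j - i⦌)) (v := F.app (op ⦋1⦌))
      (fun _ => rfl) (fun _ => rfl)
      (comm_Y Y hij hj _ _ _ _) rect bot).swap
  · rintro ⟨hY2, hsq⟩ n i j hn hij hj
    have bot := hsq (j - i) (by omega)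
    have top : IsSetPullback (rmap Y (outer n i j hij hj))
        (rmap Y (interval n i j hij.le hj))
        (rmap Y (edge (n - j + i + 1) i (i + 1) (by omega) (by omega)))
        (rmap Y (edge (j - i) 0 (j - i) (Nat.zero_le _) le_rfl)) := by
      by_cases hcase : j = i + 1
      · subst hcase
        refine IsSetPullback.of_bij (comm_Y Y hij hj _ _ _ _) ?_ ?_
        · refine rmap_bij Y (by omega) _ ?_
          intro k
          simp only [outer_val]
          split_ifs <;> omega
        · refine (rmap_bij Y (by omega) _ ?_).injective
          intro k
          have hk := k.isLt
          simp only [edge_val]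
          have : k.1 = 0 ∨ k.1 = 1 := by omega
          rcases this with h' | h' <;> rw [h'] <;> omega
      · by_cases hcase2 : i = 0 ∧ j = n
        · obtain ⟨hi0, hjn⟩ := hcase2
          subst hi0
          subst hjn
          refine (IsSetPullback.of_bij (fun a => (comm_Y Y hij hj _ _ _ _ a).symm) ?_ ?_).swap
          · refine rmap_bij Y (by omega) _ ?_
            intro k
            simp only [interval_val]
            omega
          · refine (rmap_bij Y (by omega) _ ?_).injective
            intro k
            simp only [edge_val]
            omega
        · have h3 : 3 ≤ n := by omega
          exact (hY2 n i j h3 hij hj).swap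
    exact IsSetPullback.paste (fun _ => rfl) (fun _ => rfl) top bot

end RelSegal
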